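/- For the complete bipartite graph K_{n,m} with n, m ≥ 1, GC(K_{n,m}) = n + m. -/
import Mathlib


open SimpleGraph Finset

variable {V : Type*} [Fintype V] [DecidableEq V]

/-- `S` is a dominating set of the graph `G`. -/
def IsDomSet (G : SimpleGraph V) (S : Finset V) : Prop :=
  ∀ v : V, v ∈ S ∨ ∃ u ∈ S, G.Adj u v

/-- `S` is a global dominating set of `G`: it dominates both `G` and its complement. -/
def IsGlobalDomSet (G : SimpleGraph V) (S : Finset V) : Prop :=
  IsDomSet G S ∧ IsDomSet Gᶜ S

/-- Disjoint sets `A` and `B` form a global coalition in `G`. -/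
def IsGlobalCoalition (G : SimpleGraph V) (A B : Finset V) : Prop :=
  Disjoint A B ∧ ¬ IsGlobalDomSet G A ∧ ¬ IsGlobalDomSet G B ∧ IsGlobalDomSet G (A ∪ B)

/-- `π` is a global coalition partition (gc-partition) of `G`. -/
def IsGCPartition (G : SimpleGraph V) (π : Finpartition (Finset.univ : Finset V)) : Prop :=
  ∀ A ∈ π.parts, ¬ IsGlobalDomSet G A ∧ ∃ B ∈ π.parts, B ≠ A ∧ IsGlobalCoalition G A B

/-- The global coalition number `GC(G)`: the maximum number of parts in a gc-partition of `G`. -/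
noncomputable def globalCoalitionNumber (G : SimpleGraph V) : ℕ :=
  sSup {n | ∃ π : Finpartition (Finset.univ : Finset V), IsGCPartition G π ∧ π.parts.card = n}

theorem gc_completeBipartiteGraph (n m : ℕ) (hn : 1 ≤ n) (hm : 1 ≤ m) :
    globalCoalitionNumber (completeBipartiteGraph (Fin n) (Fin m)) = n + m := by
  classical
  set G := completeBipartiteGraph (Fin n) (Fin m) with hG
  set a0 : Fin n := ⟨0, hn⟩
  set b0 : Fin m := ⟨0, hm⟩
  -- no singleton is a global dominating set
  have hsing : ∀ v : Fin n ⊕ Fin m, ¬ IsGlobalDomSet G {v} := by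
    rintro (a | b) ⟨_, h2⟩
    · rcases h2 (Sum.inr b0) with h | ⟨u, hu, hadj⟩
      · simp at h
      · simp only [Finset.mem_singleton] at hu
        subst hu
        rw [compl_adj] at hadj
        exact hadj.2 (by simp [hG])
    · rcases h2 (Sum.inl a0) with h | ⟨u, hu, hadj⟩
      · simp at h
      · simp only [Finset.mem_singleton] at hu
        subst hu
        rw [compl_adj] at hadj
        exact hadj.2 (by simp [hG])
  -- a pair from opposite sides is a global dominating set
  have hpair : ∀ (a : Fin n) (b : Fin m),
      IsGlobalDomSet G ({Sum.inl a, Sum.inr b} : Finset (Fin n ⊕ Fin m)) := by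
    intro a b
    constructor
    · rintro (x | y)
      · exact Or.inr ⟨Sum.inr b, by simp, by simp [hG]⟩
      · exact Or.inr ⟨Sum.inl a, by simp, by simp [hG]⟩
    · rintro (x | y)
      · by_cases hx : x = a
        · exact Or.inl (by simp [hx])
        · refine Or.inr ⟨Sum.inl a, by simp, ?_⟩
          rw [compl_adj]
          exact ⟨by simp [Ne]; exact fun h => hx h.symm, by simp [hG]⟩
      · by_cases hy : y = b
        · exact Or.inl (by simp [hy])
        · refine Or.inr ⟨Sum.inr b, by simp, ?_⟩
          rw [compl_adj]
          exact ⟨by simp [Ne]; exact fun h => hy h.symm, by simp [hG]⟩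
  have hcoal : ∀ (a : Fin n) (b : Fin m),
      IsGlobalCoalition G ({Sum.inl a} : Finset (Fin n ⊕ Fin m)) {Sum.inr b} := by
    intro a b
    refine ⟨by simp, hsing _, hsing _, ?_⟩
    have : ({Sum.inl a} : Finset (Fin n ⊕ Fin m)) ∪ {Sum.inr b} = {Sum.inl a, Sum.inr b} := by
      rfl
    rw [this]; exact hpair a b
  have hcoal' : ∀ (a : Fin n) (b : Fin m),
      IsGlobalCoalition G ({Sum.inr b} : Finset (Fin n ⊕ Fin m)) {Sum.inl a} := by
    intro a b
    obtain ⟨h1, h2, h3, h4⟩ := hcoal a b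
    exact ⟨h1.symm, h3, h2, by rwa [Finset.union_comm]⟩
  -- the discrete partition is a gc-partition
  have hGC : IsGCPartition G (⊥ : Finpartition (Finset.univ : Finset (Fin n ⊕ Fin m))) := by
    intro A hA
    rw [Finpartition.mem_bot_iff] at hA
    obtain ⟨v, -, rfl⟩ := hA
    refine ⟨hsing v, ?_⟩
    cases v with
    | inl a =>
        exact ⟨{Sum.inr b0}, Finpartition.mem_bot_iff.2 ⟨_, Finset.mem_univ _, rfl⟩,
          by simp, hcoal a b0⟩
    | inr b =>
        exact ⟨{Sum.inl a0}, Finpartition.mem_bot_iff.2 ⟨_, Finset.mem_univ _, rfl⟩,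
          by simp, hcoal' a0 b⟩
  have hcardbot : (⊥ : Finpartition (Finset.univ : Finset (Fin n ⊕ Fin m))).parts.card = n + m := by
    rw [Finpartition.card_bot]
    simp
  have hmem : n + m ∈ {k | ∃ π : Finpartition (Finset.univ : Finset (Fin n ⊕ Fin m)),
      IsGCPartition G π ∧ π.parts.card = k} := ⟨⊥, hGC, hcardbot⟩
  have hub : ∀ k ∈ {k | ∃ π : Finpartition (Finset.univ : Finset (Fin n ⊕ Fin m)),
      IsGCPartition G π ∧ π.parts.card = k}, k ≤ n + m := by
    rintro k ⟨π, -, rfl⟩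
    have := π.card_parts_le_card
    simpa using this
  apply le_antisymm
  · exact csSup_le ⟨n + m, hmem⟩ hub
  · exact le_csSup ⟨n + m, hub⟩ hmem
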